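/- For any star K_{1,n} with n ≥ 1, EC(K_{1,n}) = n. -/

import Mathlib

open SimpleGraph

/-- Two edges (as unordered pairs of vertices) share an endpoint. -/
def SharesEndpoint {V : Type*} (e f : Sym2 V) : Prop := ∃ v, v ∈ e ∧ v ∈ f

/-- `D` is an edge dominating set of `G`: `D` consists of edges of `G` and every
edge of `G` outside `D` shares an endpoint with some edge of `D`. -/
def IsEdgeDominating {V : Type*} (G : SimpleGraph V) (D : Set (Sym2 V)) : Prop :=
  D ⊆ G.edgeSet ∧ ∀ e ∈ G.edgeSet \ D, ∃ f ∈ D, SharesEndpoint e f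

/-- Two disjoint edge sets form an edge coalition: neither is an edge dominating
set but their union is. -/
def IsEdgeCoalition {V : Type*} (G : SimpleGraph V) (E₁ E₂ : Set (Sym2 V)) : Prop :=
  Disjoint E₁ E₂ ∧ ¬ IsEdgeDominating G E₁ ∧ ¬ IsEdgeDominating G E₂ ∧
    IsEdgeDominating G (E₁ ∪ E₂)

/-- An ec-partition of `G`: a partition of the edge set of `G` (into nonempty,
pairwise disjoint parts) such that every part either is a singleton edge
dominating set, or is not an edge dominating set but forms an edge coalition
with another part. -/
def IsECPartition {V : Type*} (G : SimpleGraph V) (P : Set (Set (Sym2 V))) : Prop :=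
  (∀ A ∈ P, A.Nonempty) ∧
  P.Pairwise Disjoint ∧
  ⋃₀ P = G.edgeSet ∧
  ∀ A ∈ P, ((∃ e, A = {e}) ∧ IsEdgeDominating G A) ∨
    (¬ IsEdgeDominating G A ∧ ∃ B ∈ P, B ≠ A ∧ IsEdgeCoalition G A B)

/-- The edge coalition number `EC(G)`: the maximum number of parts over all
ec-partitions of `G`. -/
noncomputable def edgeCoalitionNumber {V : Type*} (G : SimpleGraph V) : ℕ :=
  sSup {k | ∃ P, IsECPartition G P ∧ P.ncard = k}

/-- The star `K_{1,n}`: vertex `0` is the center, adjacent to the `n` leaves. -/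
def starGraph (n : ℕ) : SimpleGraph (Fin (n + 1)) :=
  SimpleGraph.fromRel fun u _ => u = 0


lemma star_adj {n : ℕ} {u v : Fin (n+1)} :
    (_root_.starGraph n).Adj u v ↔ u ≠ v ∧ (u = 0 ∨ v = 0) := by
  simp [_root_.starGraph, SimpleGraph.fromRel_adj]

lemma zero_mem_of_edge {n : ℕ} {e : Sym2 (Fin (n+1))} (he : e ∈ (_root_.starGraph n).edgeSet) :
    (0 : Fin (n+1)) ∈ e := by
  induction e using Sym2.ind with
  | _ u v =>
    rw [SimpleGraph.mem_edgeSet, star_adj] at he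
    rcases he.2 with h | h <;> subst h <;> simp

lemma dom_of_nonempty {n : ℕ} {D : Set (Sym2 (Fin (n+1)))}
    (hD : D ⊆ (_root_.starGraph n).edgeSet) (hne : D.Nonempty) :
    IsEdgeDominating (_root_.starGraph n) D := by
  refine ⟨hD, fun e he => ?_⟩
  obtain ⟨f, hf⟩ := hne
  exact ⟨f, hf, 0, zero_mem_of_edge he.1, zero_mem_of_edge (hD hf)⟩

lemma edgeSet_star_eq {n : ℕ} :
    (_root_.starGraph n).edgeSet = (fun i : Fin n => s(0, i.succ)) '' Set.univ := by
  ext e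
  induction e using Sym2.ind with
  | _ u v =>
    simp only [SimpleGraph.mem_edgeSet, star_adj, Set.image_univ, Set.mem_range]
    constructor
    · rintro ⟨huv, h0 | h0⟩
      · subst h0
        exact ⟨v.pred (Ne.symm huv), by rw [Fin.succ_pred]⟩
      · subst h0
        exact ⟨u.pred huv, by rw [Fin.succ_pred, Sym2.eq_swap]⟩
    · rintro ⟨i, hi⟩
      rw [Sym2.eq_iff] at hi
      rcases hi with ⟨h1, h2⟩ | ⟨h1, h2⟩
      · exact ⟨by rw [← h1, ← h2]; exact (Fin.succ_ne_zero i).symm, Or.inl h1.symm⟩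
      · exact ⟨by rw [← h1, ← h2]; exact Fin.succ_ne_zero i, Or.inr h1.symm⟩

lemma singleton_succ_inj {n : ℕ} :
    Function.Injective (fun i : Fin n => s((0 : Fin (n+1)), i.succ)) := by
  intro a b h
  simp only [Sym2.eq_iff] at h
  rcases h with ⟨_, h2⟩ | ⟨h1, _⟩
  · exact Fin.succ_injective _ h2
  · exact absurd h1.symm (Fin.succ_ne_zero b)

lemma edgeSet_star_ncard {n : ℕ} : ((_root_.starGraph n).edgeSet).ncard = n := by
  rw [edgeSet_star_eq, Set.ncard_image_of_injective _ singleton_succ_inj,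
    Set.ncard_univ, Nat.card_eq_fintype_card, Fintype.card_fin]

lemma ec_ncard {n : ℕ} {P : Set (Set (Sym2 (Fin (n+1))))}
    (hP : IsECPartition (_root_.starGraph n) P) : P.ncard = n := by
  obtain ⟨hne, hdisj, hunion, hparts⟩ := hP
  have hsing : ∀ A ∈ P, ∃ e ∈ (_root_.starGraph n).edgeSet, A = {e} := by
    intro A hA
    have hsub : A ⊆ (_root_.starGraph n).edgeSet := by
      rw [← hunion]; exact fun x hx => ⟨A, hA, hx⟩
    have hdom := dom_of_nonempty hsub (hne A hA)
    rcases hparts A hA with ⟨⟨e, he⟩, _⟩ | ⟨hnd, _⟩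
    · exact ⟨e, hsub (by simp [he]), he⟩
    · exact absurd hdom hnd
  have hPeq : P = (fun e => ({e} : Set (Sym2 (Fin (n+1))))) '' (_root_.starGraph n).edgeSet := by
    ext A
    constructor
    · intro hA
      obtain ⟨e, he, rfl⟩ := hsing A hA
      exact ⟨e, he, rfl⟩
    · rintro ⟨e, he, rfl⟩
      have hmem : e ∈ ⋃₀ P := by rw [hunion]; exact he
      obtain ⟨A, hA, heA⟩ := hmem
      obtain ⟨f, _, rfl⟩ := hsing A hA
      rw [Set.mem_singleton_iff] at heA
      rw [← heA] at hA
      exact hA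
  rw [hPeq, Set.ncard_image_of_injective _ (fun a b h => by simpa using h),
    edgeSet_star_ncard]

lemma ec_exists {n : ℕ} :
    IsECPartition (_root_.starGraph n)
      ((fun e => ({e} : Set (Sym2 (Fin (n+1))))) '' (_root_.starGraph n).edgeSet) := by
  refine ⟨?_, ?_, ?_, ?_⟩
  · rintro A ⟨e, _, rfl⟩; exact ⟨e, rfl⟩
  · rintro A ⟨e, _, rfl⟩ B ⟨f, _, rfl⟩ hAB
    rw [Set.disjoint_singleton]
    intro h; exact hAB (by rw [h])
  · ext e
    simp only [Set.sUnion_image, Set.mem_iUnion, Set.mem_singleton_iff]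
    constructor
    · rintro ⟨f, hf, rfl⟩; exact hf
    · intro he; exact ⟨e, he, rfl⟩
  · rintro A ⟨e, he, rfl⟩
    exact Or.inl ⟨⟨e, rfl⟩, dom_of_nonempty (by simpa using he) ⟨e, rfl⟩⟩

/-- For any star `K_{1,n}` with `n ≥ 1`, `EC(K_{1,n}) = n`. -/
theorem edgeCoalitionNumber_star (n : ℕ) (hn : 1 ≤ n) :
    edgeCoalitionNumber (_root_.starGraph n) = n := by
  have hset : {k | ∃ P, IsECPartition (_root_.starGraph n) P ∧ P.ncard = k} = {n} := by
    ext k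
    simp only [Set.mem_setOf_eq, Set.mem_singleton_iff]
    constructor
    · rintro ⟨P, hP, rfl⟩; exact ec_ncard hP
    · rintro rfl; exact ⟨_, ec_exists, ec_ncard ec_exists⟩
  rw [edgeCoalitionNumber, hset, csSup_singleton]
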